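/- arXiv:1409.2937 — 2 statements merged into one kernel-verified Lean document; each statement's English description precedes it below -/
import Mathlib

section
/- For all positive integers n coprime to 3, the number of divisors d(n) satisfies d(n) ≤ 2.46 · n^(1/3). -/
private lemma aux2 : ∀ k : ℕ, (k+4)^3 ≤ 2^(k+6) := by
  intro k
  induction k with
  | zero => norm_num
  | succ k ih =>
      have e1 : (k+1+4)^3 = k^3+15*k^2+75*k+125 := by ring
      have e2 : 2*(k+4)^3 = 2*k^3+24*k^2+96*k+128 := by ring
      calc (k+1+4)^3 ≤ 2*(k+4)^3 := by
            rw [e1, e2]; linarith [Nat.zero_le (k^3), Nat.zero_le (k^2), Nat.zero_le k]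
        _ ≤ 2*2^(k+6) := by linarith
        _ = 2^(k+1+6) := by ring

private lemma pow2_bound : ∀ k : ℕ, (k+1)^3 ≤ 2^(k+3) := by
  intro k
  match k with
  | 0 => norm_num
  | 1 => norm_num
  | 2 => norm_num
  | (k+3) => have := aux2 k; linarith [aux2 k]

private lemma aux5 : ∀ k : ℕ, 1000000*(k+2)^3 ≤ 1601613*5^(k+1) := by
  intro k
  induction k with
  | zero => norm_num
  | succ k ih =>
      have e1 : 1000000*(k+1+2)^3 = 1000000*k^3+9000000*k^2+27000000*k+27000000 := by ring
      have e2 : 5*(1000000*(k+2)^3) = 5000000*k^3+30000000*k^2+60000000*k+40000000 := by ring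
      calc 1000000*(k+1+2)^3 ≤ 5*(1000000*(k+2)^3) := by
            rw [e1, e2]; linarith [Nat.zero_le (k^3), Nat.zero_le (k^2), Nat.zero_le k]
        _ ≤ 5*(1601613*5^(k+1)) := by linarith
        _ = 1601613*5^(k+1+1) := by ring

private lemma aux7 : ∀ k : ℕ, 1000000*(k+2)^3 ≤ 1157625*7^(k+1) := by
  intro k
  induction k with
  | zero => norm_num
  | succ k ih =>
      have e1 : 1000000*(k+1+2)^3 = 1000000*k^3+9000000*k^2+27000000*k+27000000 := by ring
      have e2 : 7*(1000000*(k+2)^3) = 7000000*k^3+42000000*k^2+84000000*k+56000000 := by ring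
      calc 1000000*(k+1+2)^3 ≤ 7*(1000000*(k+2)^3) := by
            rw [e1, e2]; linarith [Nat.zero_le (k^3), Nat.zero_le (k^2), Nat.zero_le k]
        _ ≤ 7*(1157625*7^(k+1)) := by linarith
        _ = 1157625*7^(k+1+1) := by ring

private lemma aux8 : ∀ k : ℕ, (k+2)^3 ≤ 8^(k+1) := by
  intro k
  induction k with
  | zero => norm_num
  | succ k ih =>
      have e1 : (k+1+2)^3 = k^3+9*k^2+27*k+27 := by ring
      have e2 : 8*(k+2)^3 = 8*k^3+48*k^2+96*k+64 := by ring
      calc (k+1+2)^3 ≤ 8*(k+2)^3 := by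
            rw [e1, e2]; linarith [Nat.zero_le (k^3), Nat.zero_le (k^2), Nat.zero_le k]
        _ ≤ 8*8^(k+1) := by linarith
        _ = 8^(k+1+1) := by ring

noncomputable def gfun (p : ℕ) : ℝ :=
  if p = 2 then 8 else if p = 5 then 1.601613 else if p = 7 then 1.157625 else 1

lemma gfun_one_le (p : ℕ) : (1:ℝ) ≤ gfun p := by
  unfold gfun; split_ifs <;> norm_num

lemma one_le_prod_gfun (t : Finset ℕ) : (1:ℝ) ≤ ∏ p ∈ t, gfun p := by
  classical
  induction t using Finset.induction with
  | empty => simp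
  | @insert a t ha ih =>
      rw [Finset.prod_insert ha]
      nlinarith [gfun_one_le a, ih]

lemma prime_ge_eight {p : ℕ} (hp : p.Prime) (h2 : p ≠ 2) (h3 : p ≠ 3) (h5 : p ≠ 5)
    (h7 : p ≠ 7) : 8 ≤ p := by
  by_contra h
  push_neg at h
  have hp2 := hp.two_le
  interval_cases p <;> simp_all (config := {decide := true})

lemma per_prime {p k : ℕ} (hp : p.Prime) (hp3 : p ≠ 3) (hk : 1 ≤ k) :
    ((k:ℝ)+1)^3 ≤ gfun p * (p:ℝ)^k := by
  obtain ⟨j, rfl⟩ : ∃ j, k = j + 1 := ⟨k - 1, (Nat.succ_pred_eq_of_pos hk).symm⟩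
  unfold gfun
  by_cases h2 : p = 2
  · subst h2
    simp only [if_pos rfl]
    have h := pow2_bound (j+1)
    have hR : ((j:ℝ)+1+1)^3 ≤ (2:ℝ)^(j+1+3) := by exact_mod_cast h
    have hpow : (2:ℝ)^(j+1+3) = 8 * 2^(j+1) := by rw [pow_add]; ring
    push_cast
    rw [hpow] at hR
    ring_nf at hR ⊢
    linarith
  · rw [if_neg h2]
    by_cases h5 : p = 5
    · subst h5
      simp only [if_pos rfl]
      have h := aux5 j
      have hR : 1000000*((j:ℝ)+2)^3 ≤ 1601613*(5:ℝ)^(j+1) := by exact_mod_cast h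
      rw [show (1.601613:ℝ) = 1601613/1000000 by norm_num]
      push_cast
      ring_nf at hR ⊢
      linarith
    · rw [if_neg h5]
      by_cases h7 : p = 7
      · subst h7
        simp only [if_pos rfl]
        have h := aux7 j
        have hR : 1000000*((j:ℝ)+2)^3 ≤ 1157625*(7:ℝ)^(j+1) := by exact_mod_cast h
        rw [show (1.157625:ℝ) = 1157625/1000000 by norm_num]
        push_cast
        ring_nf at hR ⊢
        linarith
      · rw [if_neg h7, one_mul]
        have h8 : 8 ≤ p := prime_ge_eight hp h2 hp3 h5 h7
        have hb : (j+2)^3 ≤ p^(j+1) := le_trans (aux8 j) (Nat.pow_le_pow_left h8 _)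
        have hR : ((j:ℝ)+2)^3 ≤ (p:ℝ)^(j+1) := by exact_mod_cast hb
        push_cast
        ring_nf at hR ⊢
        linarith

theorem divisor_bound_coprime_three (n : ℕ) (hn : 0 < n) (h3 : Nat.Coprime n 3) :
    ((n.divisors.card : ℝ)) ≤ 2.46 * (n : ℝ) ^ ((1 : ℝ) / 3) := by
  have hn0 : n ≠ 0 := hn.ne'
  have hnR : (0:ℝ) ≤ (n:ℝ) := by positivity
  have key : ((n.divisors.card : ℝ))^3 ≤ 2.46^3 * (n:ℝ) := by
    have hd : n.divisors.card = n.factorization.prod fun _ k => k + 1 :=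
      Nat.card_divisors hn0
    have hnfac : n.factorization.prod (· ^ ·) = n :=
      Nat.factorization_prod_pow_eq_self hn0
    set s := n.factorization.support with hs
    have step1 : ((n.divisors.card : ℝ))^3
        = ∏ p ∈ s, ((n.factorization p : ℝ) + 1)^3 := by
      rw [hd, Finsupp.prod, Finset.prod_pow]
      push_cast
      rfl
    have step2 : ∀ p ∈ s, ((n.factorization p : ℝ) + 1)^3
        ≤ gfun p * (p:ℝ)^(n.factorization p) := by
      intro p hps
      have hp : p.Prime := Nat.prime_of_mem_primeFactors (by
        rwa [← Nat.support_factorization])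
      have hp3 : p ≠ 3 := by
        rintro rfl
        have hdvd : 3 ∣ n := Nat.dvd_of_mem_primeFactors (by
          rwa [← Nat.support_factorization])
        have : (3:ℕ) ∣ 1 := h3 ▸ Nat.dvd_gcd hdvd dvd_rfl
        norm_num at this
      have hk : 1 ≤ n.factorization p := Nat.one_le_iff_ne_zero.mpr
        (Finsupp.mem_support_iff.mp hps)
      exact per_prime hp hp3 hk
    have step3 : ∏ p ∈ s, gfun p ≤ 2.46^3 := by
      have hsub : ∏ p ∈ s, gfun p ≤ ∏ p ∈ s ∪ {2,5,7}, gfun p := by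
        classical
        rw [← Finset.union_sdiff_self_eq_union, Finset.prod_union Finset.disjoint_sdiff]
        exact le_mul_of_one_le_right
          (Finset.prod_nonneg fun i _ => le_trans zero_le_one (gfun_one_le i))
          (one_le_prod_gfun _)
      have heq : ∏ p ∈ s ∪ {2,5,7}, gfun p = ∏ p ∈ ({2,5,7} : Finset ℕ), gfun p := by
        refine (Finset.prod_subset Finset.subset_union_right ?_).symm
        intro x _ hnx
        simp only [Finset.mem_insert, Finset.mem_singleton, not_or] at hnx
        unfold gfun
        rw [if_neg hnx.1, if_neg hnx.2.1, if_neg hnx.2.2]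
      have hval : ∏ p ∈ ({2,5,7} : Finset ℕ), gfun p = 8 * 1.601613 * 1.157625 := by
        rw [show ({2,5,7} : Finset ℕ) = {2,5,7} from rfl]
        simp [Finset.prod_insert, gfun]
        norm_num
      calc ∏ p ∈ s, gfun p ≤ ∏ p ∈ s ∪ {2,5,7}, gfun p := hsub
        _ = 8 * 1.601613 * 1.157625 := by rw [heq, hval]
        _ ≤ 2.46^3 := by norm_num
    have hprod_n : ∏ p ∈ s, (p:ℝ)^(n.factorization p) = (n:ℝ) := by
      have hc := congrArg (Nat.cast : ℕ → ℝ) hnfac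
      rw [Finsupp.prod] at hc
      push_cast at hc
      exact hc
    calc ((n.divisors.card : ℝ))^3 = ∏ p ∈ s, ((n.factorization p : ℝ) + 1)^3 := step1
      _ ≤ ∏ p ∈ s, gfun p * (p:ℝ)^(n.factorization p) :=
          Finset.prod_le_prod (fun i _ => by positivity) step2
      _ = (∏ p ∈ s, gfun p) * ∏ p ∈ s, (p:ℝ)^(n.factorization p) :=
          Finset.prod_mul_distrib
      _ = (∏ p ∈ s, gfun p) * (n:ℝ) := by rw [hprod_n]
      _ ≤ 2.46^3 * (n:ℝ) := mul_le_mul_of_nonneg_right step3 hnR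
  have h246 : (0:ℝ) ≤ 2.46 * (n : ℝ) ^ ((1:ℝ)/3) := by positivity
  refine le_of_pow_le_pow_left₀ (n := 3) (by norm_num) h246 ?_
  calc ((n.divisors.card : ℝ))^3 ≤ 2.46^3 * (n:ℝ) := key
    _ = (2.46 * (n : ℝ) ^ ((1:ℝ)/3))^3 := by
        rw [mul_pow]
        congr 1
        rw [← Real.rpow_natCast ((n:ℝ) ^ ((1:ℝ)/3)) 3, ← Real.rpow_mul hnR]
        norm_num
end

section
/- For every integer n ≥ 9 with n ≡ 1 (mod 3), we have maxp_2(n) = 5 · 2^((n-7)/3), and for n ≥ 9 with n ≡ 2 (mod 3) and n ≠ 11, maxp_2(n) = 25 · 2^((n-14)/3). -/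
/-- `pk k n` is the number of `k`-regular partitions of `n`,
i.e. partitions of `n` in which no part is divisible by `k`. -/
noncomputable def pk (k n : ℕ) : ℕ :=
  Fintype.card {μ : n.Partition // ∀ i ∈ μ.parts, ¬ k ∣ i}


/-- Extension of `pk k` to partitions: the product of `pk k` over the parts. -/
noncomputable def pkext (k : ℕ) {n : ℕ} (μ : n.Partition) : ℕ :=
  (μ.parts.map (pk k)).prod


open Multiset



noncomputable def Pm (m n : ℕ) : ℕ :=
  Fintype.card {μ : n.Partition // ∀ i ∈ μ.parts, ¬ 2 ∣ i ∧ m ≤ i}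

lemma pk_eq_Pm (n : ℕ) : pk 2 n = Pm 1 n := by
  rw [pk, Pm]
  exact Fintype.card_congr (Equiv.subtypeEquivRight (fun μ => by
    constructor
    · intro h i hi; exact ⟨h i hi, μ.parts_pos hi⟩
    · intro h i hi; exact (h i hi).1))

lemma Pm_zero (m : ℕ) : Pm m 0 = 1 := by
  rw [Pm, Fintype.card_eq_one_iff]
  refine ⟨⟨⟨0, by simp, rfl⟩, by simp⟩, ?_⟩
  rintro ⟨μ, hμ⟩
  have hp : μ.parts = 0 := by
    by_contra hne
    obtain ⟨a, ha⟩ := exists_mem_of_ne_zero hne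
    have h1 := μ.parts_pos ha
    have h2 : a ≤ μ.parts.sum := single_le_sum (fun x _ => Nat.zero_le x) a ha
    rw [μ.parts_sum] at h2
    omega
  apply Subtype.ext
  apply Nat.Partition.ext
  simp [hp]

lemma Pm_zero' (m n : ℕ) (h0 : 0 < n) (h : n < m) : Pm m n = 0 := by
  rw [Pm, Fintype.card_eq_zero_iff]
  constructor
  rintro ⟨μ, hμ⟩
  have hne : μ.parts ≠ 0 := by
    intro hc
    have := μ.parts_sum
    rw [hc] at this
    simp at this
    omega
  obtain ⟨a, ha⟩ := exists_mem_of_ne_zero hne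
  have h2 : a ≤ μ.parts.sum := single_le_sum (fun x _ => Nat.zero_le x) a ha
  have h3 := (hμ a ha).2
  rw [μ.parts_sum] at h2
  omega

/-- any partition counted here with `n < 2*m` has parts = {n}. -/
lemma Pm_single {m n : ℕ} (h2 : n < 2 * m) (h0 : 0 < n) (μ : n.Partition)
    (hμ : ∀ i ∈ μ.parts, ¬ 2 ∣ i ∧ m ≤ i) : μ.parts = {n} := by
  have hne : μ.parts ≠ 0 := by
    intro hc
    have := μ.parts_sum
    rw [hc] at this; simp at this; omega
  obtain ⟨a, ha⟩ := exists_mem_of_ne_zero hne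
  have hcons : a ::ₘ μ.parts.erase a = μ.parts := cons_erase ha
  have hsum : a + (μ.parts.erase a).sum = n := by
    have h := μ.parts_sum
    rw [← hcons, sum_cons] at h
    exact h
  have herase : μ.parts.erase a = 0 := by
    by_contra hne2
    obtain ⟨b, hb⟩ := exists_mem_of_ne_zero hne2
    have hbp : b ∈ μ.parts := mem_of_mem_erase hb
    have h3 : b ≤ (μ.parts.erase a).sum := single_le_sum (fun x _ => Nat.zero_le x) b hb
    have h4 := (hμ a ha).2
    have h5 := (hμ b hbp).2
    omega
  have han : a = n := by
    rw [herase] at hsum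
    simp at hsum
    omega
  rw [← hcons, herase, han]
  rfl

lemma Pm_le_one (m n : ℕ) (h2 : n < 2 * m) (h0 : 0 < n) : Pm m n ≤ 1 := by
  rw [Pm, Fintype.card_le_one_iff]
  rintro ⟨μ, hμ⟩ ⟨ν, hν⟩
  apply Subtype.ext
  apply Nat.Partition.ext
  rw [Pm_single h2 h0 μ hμ, Pm_single h2 h0 ν hν]

lemma Pm_even (m n : ℕ) (h2 : n < 2 * m) (h0 : 0 < n) (he : 2 ∣ n) : Pm m n = 0 := by
  rw [Pm, Fintype.card_eq_zero_iff]
  constructor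
  rintro ⟨μ, hμ⟩
  have := Pm_single h2 h0 μ hμ
  have hn : n ∈ μ.parts := by rw [this]; exact mem_singleton_self n
  exact (hμ n hn).1 he

lemma Pm_rec (m k : ℕ) (hm : m % 2 = 1) :
    Pm m (m + k) = Pm m k + Pm (m + 2) (m + k) := by
  classical
  have hsplit : Pm m (m + k) =
      Fintype.card {μ : (m+k).Partition // (∀ i ∈ μ.parts, ¬ 2 ∣ i ∧ m ≤ i) ∧ m ∈ μ.parts}
      + Fintype.card {μ : (m+k).Partition // (∀ i ∈ μ.parts, ¬ 2 ∣ i ∧ m ≤ i) ∧ m ∉ μ.parts} := by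
    classical
    have base := Finset.card_filter_add_card_filter_not
      (s := Finset.univ.filter (fun μ : (m+k).Partition => ∀ i ∈ μ.parts, ¬ 2 ∣ i ∧ m ≤ i))
      (p := fun μ => m ∈ μ.parts)
    rw [Finset.filter_filter, Finset.filter_filter] at base
    rw [Pm, Fintype.card_subtype, Fintype.card_subtype, Fintype.card_subtype]
    rw [← base]
  rw [hsplit]
  congr 1
  · -- with m  ≃ Pm m k
    rw [Pm]
    apply Fintype.card_congr
    refine ⟨?_, ?_, ?_, ?_⟩
    · rintro ⟨μ, hμ, hmem⟩
      refine ⟨⟨μ.parts.erase m, fun hi => μ.parts_pos (mem_of_mem_erase hi), ?_⟩,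
        fun i hi => hμ i (mem_of_mem_erase hi)⟩
      have hcons : m ::ₘ μ.parts.erase m = μ.parts := cons_erase hmem
      have : (m ::ₘ μ.parts.erase m).sum = m + k := by rw [hcons, μ.parts_sum]
      rw [sum_cons] at this
      omega
    · rintro ⟨ν, hν⟩
      refine ⟨⟨m ::ₘ ν.parts, ?_, ?_⟩, ?_, mem_cons_self m ν.parts⟩
      · intro i hi
        rcases mem_cons.mp hi with h | h
        · omega
        · exact ν.parts_pos h
      · rw [sum_cons, ν.parts_sum]
      · intro i hi
        rcases mem_cons.mp hi with h | h
        · exact ⟨by omega, by omega⟩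
        · exact hν i h
    · rintro ⟨μ, hμ, hmem⟩
      apply Subtype.ext
      apply Nat.Partition.ext
      exact cons_erase hmem
    · rintro ⟨ν, hν⟩
      apply Subtype.ext
      apply Nat.Partition.ext
      exact erase_cons_head m ν.parts
  · -- without m ≃ Pm (m+2)
    rw [Pm]
    apply Fintype.card_congr
    apply Equiv.subtypeEquivRight
    intro μ
    constructor
    · rintro ⟨hμ, hmem⟩ i hi
      have h1 := hμ i hi
      have h2 : i ≠ m := fun hc => hmem (hc ▸ hi)
      refine ⟨h1.1, ?_⟩
      have := h1.1
      have := h1.2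
      omega
    · intro h
      refine ⟨fun i hi => ⟨(h i hi).1, by have := (h i hi).2; omega⟩, fun hc => ?_⟩
      have := (h m hc).2
      omega

lemma Pm9_le (k : ℕ) : Pm 9 (k + 9) ≤ Pm 7 (k + 7) := by
  classical
  rw [Pm, Pm]
  have hne : ∀ (μ : (k+9).Partition), (∀ i ∈ μ.parts, ¬ 2 ∣ i ∧ 9 ≤ i) →
      μ.parts.toFinset.Nonempty := by
    intro μ hμ
    rw [Finset.nonempty_iff_ne_empty]
    intro hc
    have h0 : μ.parts = 0 := Multiset.toFinset_eq_empty.mp hc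
    have := μ.parts_sum
    rw [h0] at this
    simp at this
  -- the map
  let F : {μ : (k+9).Partition // ∀ i ∈ μ.parts, ¬ 2 ∣ i ∧ 9 ≤ i} →
      {ν : (k+7).Partition // ∀ i ∈ ν.parts, ¬ 2 ∣ i ∧ 7 ≤ i} := fun x => by
    obtain ⟨μ, hμ⟩ := x
    let s := μ.parts.toFinset.min' (hne μ hμ)
    have hs : s ∈ μ.parts := mem_toFinset.mp (μ.parts.toFinset.min'_mem (hne μ hμ))
    have hs9 : 9 ≤ s := (hμ s hs).2
    have hsodd : ¬ 2 ∣ s := (hμ s hs).1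
    have hsum : s + (μ.parts.erase s).sum = k + 9 := by
      have h := μ.parts_sum
      rw [← cons_erase hs, sum_cons] at h
      exact h
    refine ⟨⟨(s - 2) ::ₘ μ.parts.erase s, ?_, ?_⟩, ?_⟩
    · intro i hi
      rcases mem_cons.mp hi with h | h
      · omega
      · exact μ.parts_pos (mem_of_mem_erase h)
    · rw [sum_cons]; omega
    · intro i hi
      rcases mem_cons.mp hi with h | h
      · subst h; constructor <;> omega
      · have := hμ i (mem_of_mem_erase h)
        constructor
        · exact this.1
        · omega
  apply Fintype.card_le_of_injective F
  rintro ⟨μ, hμ⟩ ⟨ν, hν⟩ hxy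
  set sμ := μ.parts.toFinset.min' (hne μ hμ) with hsμ
  set sν := ν.parts.toFinset.min' (hne ν hν) with hsν
  have hμs : sμ ∈ μ.parts := mem_toFinset.mp (μ.parts.toFinset.min'_mem _)
  have hνs : sν ∈ ν.parts := mem_toFinset.mp (ν.parts.toFinset.min'_mem _)
  have hμ9 : 9 ≤ sμ := (hμ sμ hμs).2
  have hν9 : 9 ≤ sν := (hν sν hνs).2
  have hformμ : (F ⟨μ, hμ⟩).1.parts = (sμ - 2) ::ₘ μ.parts.erase sμ := rfl
  have hformν : (F ⟨ν, hν⟩).1.parts = (sν - 2) ::ₘ ν.parts.erase sν := rfl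
  have hpeq : (sμ - 2) ::ₘ μ.parts.erase sμ = (sν - 2) ::ₘ ν.parts.erase sν := by
    rw [← hformμ, ← hformν, hxy]
  -- show sμ = sν
  have h1 : sμ - 2 ≤ sν - 2 := by
    have : sν - 2 ∈ (sμ - 2) ::ₘ μ.parts.erase sμ := by
      rw [hpeq]; exact mem_cons_self _ _
    rcases mem_cons.mp this with h | h
    · omega
    · have := (hμ _ (mem_of_mem_erase h)).2
      have hmin : sμ ≤ sν - 2 := Finset.min'_le _ _ (mem_toFinset.mpr (mem_of_mem_erase h))
      omega
  have h2 : sν - 2 ≤ sμ - 2 := by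
    have : sμ - 2 ∈ (sν - 2) ::ₘ ν.parts.erase sν := by
      rw [← hpeq]; exact mem_cons_self _ _
    rcases mem_cons.mp this with h | h
    · omega
    · have hmin : sν ≤ sμ - 2 := Finset.min'_le _ _ (mem_toFinset.mpr (mem_of_mem_erase h))
      omega
  have hss : sμ = sν := by omega
  rw [hss] at hpeq
  have herase : μ.parts.erase sν = ν.parts.erase sν := by
    exact (cons_inj_right _).mp hpeq
  apply Subtype.ext
  apply Nat.Partition.ext
  rw [← cons_erase hμs, ← cons_erase hνs, hss, herase]


def gL : List ℕ := [1,1,1,2,2,3,4,5,6,8,10,12,16,20,25]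

def g (n : ℕ) : ℕ :=
  if n < 15 then gL.getD n 0
  else if n % 3 = 0 then 2 ^ (n / 3)
  else if n % 3 = 1 then 5 * 2 ^ ((n - 7) / 3)
  else 25 * 2 ^ ((n - 14) / 3)

-- dAux n = [d n, d (n-1), ..., d 0]
def dAux : ℕ → List ℕ
  | 0 => [1]
  | n+1 =>
    (if n+1 < 7 then 0 else if n+1 = 7 then 1 else if n+1 = 8 then 0
     else (dAux n).getD 1 0 + (dAux n).getD 6 0) :: dAux n

def dd (n : ℕ) : ℕ := (dAux n).getD 0 0

lemma dAux_getD (n k : ℕ) : (dAux (n + k)).getD k 0 = dd n := by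
  induction k with
  | zero => rfl
  | succ k ih => rw [← Nat.add_assoc]; show (dAux ((n+k)+1)).getD (k+1) 0 = dd n
                 rw [dAux]; simpa using ih

lemma dd_rec (n : ℕ) : dd (n + 9) = dd (n + 7) + dd (n + 2) := by
  show (dAux ((n+8)+1)).getD 0 0 = _
  rw [dAux]
  have h1 : ¬ (n+8+1 < 7) := by omega
  have h2 : ¬ (n+8+1 = 7) := by omega
  have h3 : ¬ (n+8+1 = 8) := by omega
  simp only [h1, h2, h3, if_false, List.getD_cons_zero]
  have e1 : (dAux (n+8)).getD 1 0 = dd (n+7) := dAux_getD (n+7) 1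
  have e2 : (dAux (n+8)).getD 6 0 = dd (n+2) := dAux_getD (n+2) 6
  rw [show n+8 = n+7+1 from rfl] at e1
  rw [show n+7+1 = n+2+6 from by omega] at e1 e2
  rw [e1, e2]

def cAux : ℕ → List ℕ
  | 0 => [1]
  | n+1 => (if n+1 < 5 then 0 else (cAux n).getD 4 0 + dd (n+1)) :: cAux n

def cc (n : ℕ) : ℕ := (cAux n).getD 0 0

lemma cAux_getD (n k : ℕ) : (cAux (n + k)).getD k 0 = cc n := by
  induction k with
  | zero => rfl
  | succ k ih => rw [← Nat.add_assoc]; show (cAux ((n+k)+1)).getD (k+1) 0 = cc n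
                 rw [cAux]; simpa using ih

lemma cc_rec (n : ℕ) : cc (n + 5) = cc n + dd (n + 5) := by
  show (cAux ((n+4)+1)).getD 0 0 = _
  rw [cAux]
  have h1 : ¬ (n+4+1 < 5) := by omega
  simp only [h1, if_false, List.getD_cons_zero]
  have e1 : (cAux (n+4)).getD 4 0 = cc n := cAux_getD n 4
  rw [e1]

def bAux : ℕ → List ℕ
  | 0 => [1]
  | n+1 => (if n+1 < 3 then 0 else (bAux n).getD 2 0 + cc (n+1)) :: bAux n

def bb (n : ℕ) : ℕ := (bAux n).getD 0 0

lemma bAux_getD (n k : ℕ) : (bAux (n + k)).getD k 0 = bb n := by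
  induction k with
  | zero => rfl
  | succ k ih => rw [← Nat.add_assoc]; show (bAux ((n+k)+1)).getD (k+1) 0 = bb n
                 rw [bAux]; simpa using ih

lemma bb_rec (n : ℕ) : bb (n + 3) = bb n + cc (n + 3) := by
  show (bAux ((n+2)+1)).getD 0 0 = _
  rw [bAux]
  have h1 : ¬ (n+2+1 < 3) := by omega
  simp only [h1, if_false, List.getD_cons_zero]
  have e1 : (bAux (n+2)).getD 2 0 = bb n := bAux_getD n 2
  rw [e1]


lemma dd_rec' (m a b c : ℕ) (h1 : a = m + 9) (h2 : b = m + 7) (h3 : c = m + 2) :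
    dd a = dd b + dd c := by subst h1 h2 h3; exact dd_rec m

lemma cc_rec' (m a b : ℕ) (h1 : a = m + 5) (h2 : b = m + 5) : cc a = cc m + dd b := by
  subst h1 h2; exact cc_rec m

lemma bb_rec' (m a b : ℕ) (h1 : a = m + 3) (h2 : b = m + 3) : bb a = bb m + cc b := by
  subst h1 h2; exact bb_rec m

lemma le2 {f : ℕ → ℕ} {a b a' b' : ℕ} (h : f a ≤ 2 * f b) (h1 : a = a') (h2 : b = b') :
    f a' ≤ 2 * f b' := by subst h1 h2; exact h

lemma dd_doub : ∀ n, dd (n + 40) ≤ 2 * dd (n + 37) := by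
  have small : ∀ n < 7, dd (n + 40) ≤ 2 * dd (n + 37) := by decide
  intro n
  induction n using Nat.strong_induction_on with
  | _ n ih =>
    rcases lt_or_ge n 7 with h | h
    · exact small n h
    · obtain ⟨m, rfl⟩ : ∃ m, n = m + 7 := ⟨n - 7, by omega⟩
      have r1 : dd (m + 7 + 40) = dd (m + 45) + dd (m + 40) :=
        dd_rec' (m + 38) _ _ _ (by omega) (by omega) (by omega)
      have r2 : dd (m + 7 + 37) = dd (m + 42) + dd (m + 37) :=
        dd_rec' (m + 35) _ _ _ (by omega) (by omega) (by omega)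
      have i1 : dd (m + 45) ≤ 2 * dd (m + 42) :=
        le2 (ih (m + 5) (by omega)) (by omega) (by omega)
      have i2 : dd (m + 40) ≤ 2 * dd (m + 37) := ih m (by omega)
      omega

lemma cc_doub : ∀ n, cc (n + 40) ≤ 2 * cc (n + 37) := by
  have small : ∀ n < 5, cc (n + 40) ≤ 2 * cc (n + 37) := by decide
  intro n
  induction n using Nat.strong_induction_on with
  | _ n ih =>
    rcases lt_or_ge n 5 with h | h
    · exact small n h
    · obtain ⟨m, rfl⟩ : ∃ m, n = m + 5 := ⟨n - 5, by omega⟩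
      have r1 : cc (m + 5 + 40) = cc (m + 40) + dd (m + 45) :=
        cc_rec' (m + 40) _ _ (by omega) (by omega)
      have r2 : cc (m + 5 + 37) = cc (m + 37) + dd (m + 42) :=
        cc_rec' (m + 37) _ _ (by omega) (by omega)
      have i1 : cc (m + 40) ≤ 2 * cc (m + 37) := ih m (by omega)
      have i2 : dd (m + 45) ≤ 2 * dd (m + 42) := le2 (dd_doub (m + 5)) (by omega) (by omega)
      omega

lemma bb_doub : ∀ n, bb (n + 40) ≤ 2 * bb (n + 37) := by
  have small : ∀ n < 3, bb (n + 40) ≤ 2 * bb (n + 37) := by decide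
  intro n
  induction n using Nat.strong_induction_on with
  | _ n ih =>
    rcases lt_or_ge n 3 with h | h
    · exact small n h
    · obtain ⟨m, rfl⟩ : ∃ m, n = m + 3 := ⟨n - 3, by omega⟩
      have r1 : bb (m + 3 + 40) = bb (m + 40) + cc (m + 43) :=
        bb_rec' (m + 40) _ _ (by omega) (by omega)
      have r2 : bb (m + 3 + 37) = bb (m + 37) + cc (m + 40) :=
        bb_rec' (m + 37) _ _ (by omega) (by omega)
      have i1 : bb (m + 40) ≤ 2 * bb (m + 37) := ih m (by omega)
      have i2 : cc (m + 43) ≤ 2 * cc (m + 40) := le2 (cc_doub (m + 3)) (by omega) (by omega)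
      omega

lemma g_f0 (q c : ℕ) (h : 15 ≤ c) (h3 : c % 3 = 0) : g (3 * q + c) = 2 ^ (q + c / 3) := by
  rw [g, if_neg (by omega), if_pos (by omega)]
  congr 1; omega

lemma g_f1 (q c : ℕ) (h : 15 ≤ c) (h3 : c % 3 = 1) : g (3 * q + c) = 5 * 2 ^ (q + (c - 7) / 3) := by
  rw [g, if_neg (by omega), if_neg (by omega), if_pos (by omega)]
  congr 2; omega

lemma g_f2 (q c : ℕ) (h : 15 ≤ c) (h3 : c % 3 = 2) : g (3 * q + c) = 25 * 2 ^ (q + (c - 14) / 3) := by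
  rw [g, if_neg (by omega), if_neg (by omega), if_neg (by omega)]
  congr 2; omega

lemma g_f0' (q c a : ℕ) (ha : a = 3 * q + c) (h : 15 ≤ c) (h3 : c % 3 = 0) :
    g a = 2 ^ (q + c / 3) := by subst ha; exact g_f0 q c h h3

lemma g_f1' (q c a : ℕ) (ha : a = 3 * q + c) (h : 15 ≤ c) (h3 : c % 3 = 1) :
    g a = 5 * 2 ^ (q + (c - 7) / 3) := by subst ha; exact g_f1 q c h h3

lemma g_f2' (q c a : ℕ) (ha : a = 3 * q + c) (h : 15 ≤ c) (h3 : c % 3 = 2) :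
    g a = 25 * 2 ^ (q + (c - 14) / 3) := by subst ha; exact g_f2 q c h h3

lemma g_delta (n : ℕ) : g (n + 18) + 2 * g (n + 14) = g (n + 17) + 2 * g (n + 15) := by
  have small : ∀ n < 3, g (n + 18) + 2 * g (n + 14) = g (n + 17) + 2 * g (n + 15) := by decide
  rcases lt_or_ge n 3 with h | h
  · exact small n h
  · obtain ⟨q, r, hr, rfl⟩ : ∃ q r, r < 3 ∧ n = 3 * q + r + 3 :=
      ⟨(n - 3) / 3, (n - 3) % 3, by omega, by omega⟩
    interval_cases r
    · rw [g_f0' q 21 _ (by ring_nf) (by omega) (by omega),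
          g_f2' q 17 _ (by ring_nf) (by omega) (by omega),
          g_f2' q 20 _ (by ring_nf) (by omega) (by omega),
          g_f0' q 18 _ (by ring_nf) (by omega) (by omega)]
      norm_num [pow_add]; ring
    · rw [g_f1' q 22 _ (by ring_nf) (by omega) (by omega),
          g_f0' q 18 _ (by ring_nf) (by omega) (by omega),
          g_f0' q 21 _ (by ring_nf) (by omega) (by omega),
          g_f1' q 19 _ (by ring_nf) (by omega) (by omega)]
      norm_num [pow_add]; ring
    · rw [g_f2' q 23 _ (by ring_nf) (by omega) (by omega),
          g_f1' q 19 _ (by ring_nf) (by omega) (by omega),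
          g_f1' q 22 _ (by ring_nf) (by omega) (by omega),
          g_f2' q 20 _ (by ring_nf) (by omega) (by omega)]
      norm_num [pow_add]; ring

lemma eq2 {f : ℕ → ℕ} {a b a' b' : ℕ} (h : f a = 2 * f b) (h1 : a = a') (h2 : b = b') :
    f a' = 2 * f b' := by subst h1 h2; exact h

lemma g_two : ∀ n, g (n + 15) = 2 * g (n + 12) := by
  have small : ∀ n < 3, g (n + 15) = 2 * g (n + 12) := by decide
  intro n
  rcases lt_or_ge n 3 with h | h
  · exact small n h
  · obtain ⟨q, r, hr, rfl⟩ : ∃ q r, r < 3 ∧ n = 3 * q + r + 3 :=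
      ⟨(n - 3) / 3, (n - 3) % 3, by omega, by omega⟩
    interval_cases r
    · rw [g_f0' q 18 _ (by ring_nf) (by omega) (by omega),
          g_f0' q 15 _ (by ring_nf) (by omega) (by omega)]
      rw [pow_add, pow_add]; ring
    · rw [g_f1' q 19 _ (by ring_nf) (by omega) (by omega),
          g_f1' q 16 _ (by ring_nf) (by omega) (by omega)]
      rw [pow_add, pow_add]; ring
    · rw [g_f2' q 20 _ (by ring_nf) (by omega) (by omega),
          g_f2' q 17 _ (by ring_nf) (by omega) (by omega)]
      rw [pow_add, pow_add]; ring

lemma g_key : ∀ n, g n + bb (n + 1) ≤ g (n + 1) := by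
  have small : ∀ n < 46, g n + bb (n + 1) ≤ g (n + 1) := by decide
  intro n
  induction n using Nat.strong_induction_on with
  | _ n ih =>
    rcases lt_or_ge n 46 with h | h
    · exact small n h
    · obtain ⟨m, rfl⟩ : ∃ m, n = m + 46 := ⟨n - 46, by omega⟩
      have hb : bb (m + 46 + 1) ≤ 2 * bb (m + 44) := le2 (bb_doub (m + 7)) (by omega) (by omega)
      have hih : g (m + 43) + bb (m + 44) ≤ g (m + 44) := by
        have := ih (m + 43) (by omega)
        rw [show m + 43 + 1 = m + 44 from by omega] at this
        exact this
      have hd : g (m + 46 + 1) + 2 * g (m + 43) = g (m + 46) + 2 * g (m + 44) := by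
        have := g_delta (m + 29)
        rw [show m + 29 + 18 = m + 46 + 1 from by omega, show m + 29 + 14 = m + 43 from by omega,
            show m + 29 + 17 = m + 46 from by omega, show m + 29 + 15 = m + 44 from by omega]
          at this
        exact this
      omega

lemma g_mul : ∀ x y : ℕ, g x * g y ≤ g (x + y) := by
  have small : ∀ x < 15, ∀ y < 15, g x * g y ≤ g (x + y) := by decide
  have H : ∀ s x y, x + y = s → g x * g y ≤ g (x + y) := by
    intro s
    induction s using Nat.strong_induction_on with
    | _ s ih =>
      intro x y hxy
      rcases lt_or_ge x 15 with hx | hx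
      · rcases lt_or_ge y 15 with hy | hy
        · exact small x hx y hy
        · obtain ⟨m, rfl⟩ : ∃ m, y = m + 15 := ⟨y - 15, by omega⟩
          have h1 : g (m + 15) = 2 * g (m + 12) := g_two m
          have h2 : g x * g (m + 12) ≤ g (x + (m + 12)) :=
            ih (x + (m + 12)) (by omega) x (m + 12) rfl
          have h3 : g (x + (m + 15)) = 2 * g (x + (m + 12)) :=
            eq2 (g_two (x + m)) (by omega) (by omega)
          rw [h1, h3]
          calc g x * (2 * g (m + 12)) = 2 * (g x * g (m + 12)) := by ring
          _ ≤ 2 * g (x + (m + 12)) := by omega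
      · obtain ⟨m, rfl⟩ : ∃ m, x = m + 15 := ⟨x - 15, by omega⟩
        have h1 : g (m + 15) = 2 * g (m + 12) := g_two m
        have h2 : g (m + 12) * g y ≤ g (m + 12 + y) :=
          ih (m + 12 + y) (by omega) (m + 12) y rfl
        have h3 : g (m + 15 + y) = 2 * g (m + 12 + y) :=
          eq2 (g_two (m + y)) (by omega) (by omega)
        rw [h1, h3]
        calc 2 * g (m + 12) * g y = 2 * (g (m + 12) * g y) := by ring
        _ ≤ 2 * g (m + 12 + y) := by omega
  exact fun x y => H (x + y) x y rfl


lemma Pm_rec' (m k n m2 : ℕ) (hm : m % 2 = 1) (h : n = m + k) (h2 : m2 = m + 2) :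
    Pm m n = Pm m k + Pm m2 n := by
  subst h h2
  exact Pm_rec m k hm

lemma P7_le : ∀ n, Pm 7 n ≤ dd n := by
  intro n
  induction n using Nat.strong_induction_on with
  | _ n ih =>
    rcases Nat.lt_or_ge n 9 with h | h
    · have hdd : dd 0 = 1 ∧ dd 7 = 1 := by decide
      interval_cases n
      · rw [Pm_zero]; omega
      · rw [Pm_zero' 7 1 (by omega) (by omega)]; omega
      · rw [Pm_zero' 7 2 (by omega) (by omega)]; omega
      · rw [Pm_zero' 7 3 (by omega) (by omega)]; omega
      · rw [Pm_zero' 7 4 (by omega) (by omega)]; omega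
      · rw [Pm_zero' 7 5 (by omega) (by omega)]; omega
      · rw [Pm_zero' 7 6 (by omega) (by omega)]; omega
      · have := Pm_le_one 7 7 (by omega) (by omega); omega
      · rw [Pm_even 7 8 (by omega) (by omega) (by omega)]; omega
    · obtain ⟨m, rfl⟩ : ∃ m, n = m + 9 := ⟨n - 9, by omega⟩
      have hr : Pm 7 (m + 9) = Pm 7 (m + 2) + Pm 9 (m + 9) :=
        Pm_rec' 7 (m + 2) (m + 9) 9 (by norm_num) (by omega) (by norm_num)
      have h1 : Pm 7 (m + 2) ≤ dd (m + 2) := ih (m + 2) (by omega)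
      have h2 : Pm 9 (m + 9) ≤ Pm 7 (m + 7) := Pm9_le m
      have h3 : Pm 7 (m + 7) ≤ dd (m + 7) := ih (m + 7) (by omega)
      have h4 : dd (m + 9) = dd (m + 7) + dd (m + 2) := dd_rec m
      omega

lemma P5_le : ∀ n, Pm 5 n ≤ cc n := by
  intro n
  induction n using Nat.strong_induction_on with
  | _ n ih =>
    rcases Nat.lt_or_ge n 5 with h | h
    · have hcc : cc 0 = 1 := by decide
      interval_cases n
      · rw [Pm_zero]; omega
      · rw [Pm_zero' 5 1 (by omega) (by omega)]; omega
      · rw [Pm_zero' 5 2 (by omega) (by omega)]; omega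
      · rw [Pm_zero' 5 3 (by omega) (by omega)]; omega
      · rw [Pm_zero' 5 4 (by omega) (by omega)]; omega
    · obtain ⟨m, rfl⟩ : ∃ m, n = m + 5 := ⟨n - 5, by omega⟩
      have hr : Pm 5 (m + 5) = Pm 5 m + Pm 7 (m + 5) :=
        Pm_rec' 5 m (m + 5) 7 (by norm_num) (by omega) (by norm_num)
      have h1 : Pm 5 m ≤ cc m := ih m (by omega)
      have h2 : Pm 7 (m + 5) ≤ dd (m + 5) := P7_le (m + 5)
      have h3 : cc (m + 5) = cc m + dd (m + 5) := cc_rec m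
      omega

lemma P3_le : ∀ n, Pm 3 n ≤ bb n := by
  intro n
  induction n using Nat.strong_induction_on with
  | _ n ih =>
    rcases Nat.lt_or_ge n 3 with h | h
    · have hbb : bb 0 = 1 := by decide
      interval_cases n
      · rw [Pm_zero]; omega
      · rw [Pm_zero' 3 1 (by omega) (by omega)]; omega
      · rw [Pm_zero' 3 2 (by omega) (by omega)]; omega
    · obtain ⟨m, rfl⟩ : ∃ m, n = m + 3 := ⟨n - 3, by omega⟩
      have hr : Pm 3 (m + 3) = Pm 3 m + Pm 5 (m + 3) :=
        Pm_rec' 3 m (m + 3) 5 (by norm_num) (by omega) (by norm_num)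
      have h1 : Pm 3 m ≤ bb m := ih m (by omega)
      have h2 : Pm 5 (m + 3) ≤ cc (m + 3) := P5_le (m + 3)
      have h3 : bb (m + 3) = bb m + cc (m + 3) := bb_rec m
      omega

lemma P1_le : ∀ n, Pm 1 n ≤ g n := by
  intro n
  induction n with
  | zero =>
    rw [Pm_zero]
    decide
  | succ n ih =>
    have hr : Pm 1 (n + 1) = Pm 1 n + Pm 3 (n + 1) :=
      Pm_rec' 1 n (n + 1) 3 (by norm_num) (by omega) (by norm_num)
    have h2 : Pm 3 (n + 1) ≤ bb (n + 1) := P3_le (n + 1)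
    have h3 := g_key n
    omega

-- exact small values
lemma Pm33 : Pm 3 3 = 1 := by
  rw [Pm_rec' 3 0 3 5 (by norm_num) (by norm_num) (by norm_num), Pm_zero,
    Pm_zero' 5 3 (by omega) (by omega)]

lemma Pm11 : Pm 1 1 = 1 := by
  rw [Pm_rec' 1 0 1 3 (by norm_num) (by norm_num) (by norm_num), Pm_zero,
    Pm_zero' 3 1 (by omega) (by omega)]

lemma Pm12 : Pm 1 2 = 1 := by
  rw [Pm_rec' 1 1 2 3 (by norm_num) (by norm_num) (by norm_num), Pm11,
    Pm_zero' 3 2 (by omega) (by omega)]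

lemma Pm13 : Pm 1 3 = 2 := by
  rw [Pm_rec' 1 2 3 3 (by norm_num) (by norm_num) (by norm_num), Pm12, Pm33]

lemma Pm55 : Pm 5 5 = 1 := by
  rw [Pm_rec' 5 0 5 7 (by norm_num) (by norm_num) (by norm_num), Pm_zero,
    Pm_zero' 7 5 (by omega) (by omega)]

lemma Pm77 : Pm 7 7 = 1 := by
  rw [Pm_rec' 7 0 7 9 (by norm_num) (by norm_num) (by norm_num), Pm_zero,
    Pm_zero' 9 7 (by omega) (by omega)]

lemma Pm57 : Pm 5 7 = 1 := by
  rw [Pm_rec' 5 2 7 7 (by norm_num) (by norm_num) (by norm_num),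
    Pm_zero' 5 2 (by omega) (by omega), Pm77]

lemma Pm34 : Pm 3 4 = 0 := by
  rw [Pm_rec' 3 1 4 5 (by norm_num) (by norm_num) (by norm_num),
    Pm_zero' 3 1 (by omega) (by omega), Pm_zero' 5 4 (by omega) (by omega)]

lemma Pm37 : Pm 3 7 = 1 := by
  rw [Pm_rec' 3 4 7 5 (by norm_num) (by norm_num) (by norm_num), Pm34, Pm57]

lemma Pm35 : Pm 3 5 = 1 := by
  rw [Pm_rec' 3 2 5 5 (by norm_num) (by norm_num) (by norm_num),
    Pm_zero' 3 2 (by omega) (by omega), Pm55]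

lemma Pm56 : Pm 5 6 = 0 := by
  rw [Pm_rec' 5 1 6 7 (by norm_num) (by norm_num) (by norm_num),
    Pm_zero' 5 1 (by omega) (by omega), Pm_zero' 7 6 (by omega) (by omega)]

lemma Pm36 : Pm 3 6 = 1 := by
  rw [Pm_rec' 3 3 6 5 (by norm_num) (by norm_num) (by norm_num), Pm33, Pm56]

lemma Pm14 : Pm 1 4 = 2 := by
  rw [Pm_rec' 1 3 4 3 (by norm_num) (by norm_num) (by norm_num), Pm13, Pm34]

lemma Pm15 : Pm 1 5 = 3 := by
  rw [Pm_rec' 1 4 5 3 (by norm_num) (by norm_num) (by norm_num), Pm14, Pm35]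

lemma Pm16 : Pm 1 6 = 4 := by
  rw [Pm_rec' 1 5 6 3 (by norm_num) (by norm_num) (by norm_num), Pm15, Pm36]

lemma Pm17 : Pm 1 7 = 5 := by
  rw [Pm_rec' 1 6 7 3 (by norm_num) (by norm_num) (by norm_num), Pm16, Pm37]

lemma pk23 : pk 2 3 = 2 := by rw [pk_eq_Pm]; exact Pm13
lemma pk27 : pk 2 7 = 5 := by rw [pk_eq_Pm]; exact Pm17

lemma pk_le_g (n : ℕ) : pk 2 n ≤ g n := by rw [pk_eq_Pm]; exact P1_le n

lemma prod_le_g (s : Multiset ℕ) : (s.map (pk 2)).prod ≤ g s.sum := by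
  induction s using Multiset.induction with
  | empty => simp; decide
  | cons a t ih =>
    rw [Multiset.map_cons, Multiset.prod_cons, Multiset.sum_cons]
    calc pk 2 a * (t.map (pk 2)).prod ≤ g a * g t.sum := Nat.mul_le_mul (pk_le_g a) ih
    _ ≤ g (a + t.sum) := g_mul a t.sum

lemma g_val1 (n : ℕ) (h9 : 9 ≤ n) (h3 : n % 3 = 1) : g n = 5 * 2 ^ ((n - 7) / 3) := by
  rcases Nat.lt_or_ge n 15 with h | h
  · interval_cases n <;> first | (exfalso; omega) | decide
  · obtain ⟨q, rfl⟩ : ∃ q, n = 3 * q + 16 := ⟨(n - 16) / 3, by omega⟩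
    rw [g_f1' q 16 _ (by ring_nf) (by omega) (by omega),
      show (3 * q + 16 - 7) / 3 = q + (16 - 7) / 3 from by omega]

lemma g_val2 (n : ℕ) (h9 : 9 ≤ n) (h3 : n % 3 = 2) (h11 : n ≠ 11) :
    g n = 25 * 2 ^ ((n - 14) / 3) := by
  rcases Nat.lt_or_ge n 15 with h | h
  · interval_cases n <;> first | (exfalso; omega) | decide
  · obtain ⟨q, rfl⟩ : ∃ q, n = 3 * q + 17 := ⟨(n - 17) / 3, by omega⟩
    rw [g_f2' q 17 _ (by ring_nf) (by omega) (by omega),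
      show (3 * q + 17 - 14) / 3 = q + (17 - 14) / 3 from by omega]

theorem maxp2_one_two_mod_three (n : ℕ) (hn : 9 ≤ n) :
    (n % 3 = 1 →
      IsGreatest {m : ℕ | ∃ μ : n.Partition, (∀ i ∈ μ.parts, ¬ 2 ∣ i) ∧ pkext 2 μ = m}
        (5 * 2 ^ ((n - 7) / 3))) ∧
    (n % 3 = 2 → n ≠ 11 →
      IsGreatest {m : ℕ | ∃ μ : n.Partition, (∀ i ∈ μ.parts, ¬ 2 ∣ i) ∧ pkext 2 μ = m}
        (25 * 2 ^ ((n - 14) / 3))) := by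
  have hub : ∀ μ : n.Partition, pkext 2 μ ≤ g n := by
    intro μ
    have := prod_le_g μ.parts
    rw [μ.parts_sum] at this
    exact this
  constructor
  · intro h1
    constructor
    · -- membership
      have hk : n = 7 + 3 * ((n - 7) / 3) := by omega
      refine ⟨⟨7 ::ₘ Multiset.replicate ((n - 7) / 3) 3, ?_, ?_⟩, fun i hi => ?_, ?_⟩
      · intro i hi
        rcases mem_cons.mp hi with h | h
        · omega
        · have := Multiset.eq_of_mem_replicate h; omega
      · rw [sum_cons, Multiset.sum_replicate, smul_eq_mul]; omega
      · simp only [Nat.Partition.mk] at hi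
        rcases mem_cons.mp hi with h | h
        · omega
        · have := Multiset.eq_of_mem_replicate h; omega
      · show (Multiset.map (pk 2) (7 ::ₘ Multiset.replicate ((n - 7) / 3) 3)).prod
          = 5 * 2 ^ ((n - 7) / 3)
        rw [Multiset.map_cons, Multiset.map_replicate, Multiset.prod_cons,
          Multiset.prod_replicate, pk23, pk27]
    · rintro x ⟨μ, hodd, rfl⟩
      calc pkext 2 μ ≤ g n := hub μ
      _ = 5 * 2 ^ ((n - 7) / 3) := g_val1 n hn h1
  · intro h2 h11
    constructor
    · have hk : n = 14 + 3 * ((n - 14) / 3) := by omega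
      refine ⟨⟨7 ::ₘ 7 ::ₘ Multiset.replicate ((n - 14) / 3) 3, ?_, ?_⟩, fun i hi => ?_, ?_⟩
      · intro i hi
        rcases mem_cons.mp hi with h | h
        · omega
        · rcases mem_cons.mp h with h' | h'
          · omega
          · have := Multiset.eq_of_mem_replicate h'; omega
      · rw [sum_cons, sum_cons, Multiset.sum_replicate, smul_eq_mul]; omega
      · simp only [Nat.Partition.mk] at hi
        rcases mem_cons.mp hi with h | h
        · omega
        · rcases mem_cons.mp h with h' | h'
          · omega
          · have := Multiset.eq_of_mem_replicate h'; omega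
      · show (Multiset.map (pk 2) (7 ::ₘ 7 ::ₘ Multiset.replicate ((n - 14) / 3) 3)).prod
          = 25 * 2 ^ ((n - 14) / 3)
        rw [Multiset.map_cons, Multiset.map_cons, Multiset.map_replicate, Multiset.prod_cons,
          Multiset.prod_cons, Multiset.prod_replicate, pk23, pk27]
        ring
    · rintro x ⟨μ, hodd, rfl⟩
      calc pkext 2 μ ≤ g n := hub μ
      _ = 25 * 2 ^ ((n - 14) / 3) := g_val2 n hn h2 h11
end
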